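/- Let z ∈ ℝ, h > 0, and nodes x_{i,h} = z + a_i h with fixed a₀ < ⋯ < a_n. Let p_h be the interpolating polynomial of degree ≤ n with p_h(x_{i,h}) = f(x_{i,h}) for a function f ∈ C^{n+1} in a neighborhood of z. Write P_h(w) = p_h(z + wh) = Σ_{j=0}^n L_j(h) w^j. Then for each 0 ≤ j ≤ n, L_j(h) = (h^j/j!)·f^{(j)}(z) + O(h^{n+1}) as h → 0⁺. -/

import Mathlib

open Polynomial Asymptotics Filter Topology

lemma iterDW_eq_iterD {f : ℝ → ℝ} {z δ T : ℝ} {n : ℕ}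
    (hf : ContDiffOn ℝ (n + 1) f (Metric.ball z δ)) (hzT : z < T)
    (hsub : Set.Icc z T ⊆ Metric.ball z δ) {k : ℕ} (hk : k ≤ n + 1) :
    iteratedDerivWithin k f (Set.Icc z T) z = iteratedDeriv k f z := by
  have hball : UniqueDiffOn ℝ (Metric.ball z δ) := Metric.isOpen_ball.uniqueDiffOn
  have hIcc : UniqueDiffOn ℝ (Set.Icc z T) := uniqueDiffOn_Icc hzT
  have hz : z ∈ Metric.ball z δ := hsub ⟨le_refl z, hzT.le⟩
  have hts := (hf.ftaylorSeriesWithin hball).mono hsub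
  have h1 := hts.eq_iteratedFDerivWithin_of_uniqueDiffOn (m := k)
    (by exact_mod_cast hk) hIcc ⟨le_refl z, hzT.le⟩
  have h2 : ftaylorSeriesWithin ℝ f (Metric.ball z δ) z k
      = iteratedFDeriv ℝ k f z := by
    have := iteratedFDerivWithin_of_isOpen (f := f) (𝕜 := ℝ) (s := Metric.ball z δ)
      k Metric.isOpen_ball hz
    simpa [ftaylorSeriesWithin] using this
  rw [iteratedDerivWithin_eq_iteratedFDerivWithin, iteratedDeriv_eq_iteratedFDeriv,
    ← h1, h2]

lemma taylor_isBigO_right {f : ℝ → ℝ} {z δ : ℝ} (hδ : 0 < δ) {n : ℕ}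
    (hf : ContDiffOn ℝ (n + 1) f (Metric.ball z δ)) :
    (fun x => f x - ∑ k ∈ Finset.range (n + 1),
        (k.factorial : ℝ)⁻¹ * (x - z) ^ k * iteratedDeriv k f z)
      =O[𝓝[≥] z] fun x => (x - z) ^ (n + 1) := by
  set T := z + δ / 2 with hT
  have hzT : z < T := by simp [hT]; linarith
  have hsub : Set.Icc z T ⊆ Metric.ball z δ := by
    intro x hx
    simp only [Metric.mem_ball, Real.dist_eq]
    rw [abs_of_nonneg (by linarith [hx.1])]
    have := hx.2
    simp only [hT] at this ⊢
    linarith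
  obtain ⟨C, hC⟩ := exists_taylor_mean_remainder_bound hzT.le (hf.mono hsub)
  have htay : ∀ x : ℝ, taylorWithinEval f n (Set.Icc z T) z x
      = ∑ k ∈ Finset.range (n + 1),
        (k.factorial : ℝ)⁻¹ * (x - z) ^ k * iteratedDeriv k f z := by
    intro x
    rw [taylor_within_apply]
    refine Finset.sum_congr rfl fun k hk => ?_
    have hk' : k ≤ n + 1 := Nat.le_of_lt_succ (Finset.mem_range.mp hk) |>.trans (Nat.le_succ n)
    rw [iterDW_eq_iterD hf hzT hsub hk', smul_eq_mul]
  rw [isBigO_iff]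
  refine ⟨C, ?_⟩
  filter_upwards [Icc_mem_nhdsGE_of_mem ⟨le_refl z, hzT⟩] with x hx
  have := hC x hx
  rw [htay] at this
  calc ‖f x - ∑ k ∈ Finset.range (n + 1),
      (k.factorial : ℝ)⁻¹ * (x - z) ^ k * iteratedDeriv k f z‖
      ≤ C * (x - z) ^ (n + 1) := this
    _ = C * ‖(x - z) ^ (n + 1)‖ := by
        rw [Real.norm_eq_abs, abs_of_nonneg (pow_nonneg (by linarith [hx.1]) _)]

lemma taylor_isBigO {f : ℝ → ℝ} {z δ : ℝ} (hδ : 0 < δ) {n : ℕ}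
    (hf : ContDiffOn ℝ (n + 1) f (Metric.ball z δ)) :
    (fun x => f x - ∑ k ∈ Finset.range (n + 1),
        (k.factorial : ℝ)⁻¹ * (x - z) ^ k * iteratedDeriv k f z)
      =O[𝓝 z] fun x => (x - z) ^ (n + 1) := by
  rw [← nhdsLE_sup_nhdsGE]
  refine IsBigO.sup ?_ (taylor_isBigO_right hδ hf)
  -- left side by reflection
  set F : ℝ → ℝ := fun x => f (2 * z - x) with hF
  have hFc : ContDiffOn ℝ (n + 1) F (Metric.ball z δ) := by
    refine hf.comp ?_ ?_
    · exact (contDiff_const.sub contDiff_id).contDiffOn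
    · intro x hx
      simp only [Metric.mem_ball, Real.dist_eq] at hx ⊢
      rw [show 2 * z - x - z = -(x - z) by ring, abs_neg]
      exact hx
  have hFd : ∀ k : ℕ, iteratedDeriv k F z = (-1 : ℝ) ^ k * iteratedDeriv k f z := by
    intro k
    have h1 : F = fun x => (fun y => f (2 * z + y)) (-x) := by
      funext x; simp [hF, sub_eq_add_neg]
    rw [h1, iteratedDeriv_comp_neg k (fun y => f (2 * z + y)) z,
      iteratedDeriv_comp_const_add k f (2 * z)]
    norm_num [smul_eq_mul]
    rw [show 2 * z + -z = z by ring]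
  have hright := taylor_isBigO_right hδ hFc
  have hφ : Tendsto (fun x : ℝ => 2 * z - x) (𝓝[≤] z) (𝓝[≥] z) := by
    apply tendsto_nhdsWithin_of_tendsto_nhds_of_eventually_within
    · have hc : Continuous fun x : ℝ => 2 * z - x := by continuity
      exact (hc.tendsto' z z (by ring)).mono_left nhdsWithin_le_nhds
    · filter_upwards [self_mem_nhdsWithin] with x (hx : x ≤ z)
      simp only [Set.mem_Ici]; linarith
  have hcomp := hright.comp_tendsto hφ
  have heq : ((fun x => F x - ∑ k ∈ Finset.range (n + 1),
        (k.factorial : ℝ)⁻¹ * (x - z) ^ k * iteratedDeriv k F z) ∘ fun x : ℝ => 2 * z - x)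
      = fun x => f x - ∑ k ∈ Finset.range (n + 1),
        (k.factorial : ℝ)⁻¹ * (x - z) ^ k * iteratedDeriv k f z := by
    funext x
    simp only [Function.comp_apply, hF]
    rw [show 2 * z - (2 * z - x) = x by ring]
    congr 1
    refine Finset.sum_congr rfl fun k _ => ?_
    rw [hFd k, show 2 * z - x - z = -(x - z) by ring]
    rcases Nat.even_or_odd k with hk | hk
    · rw [hk.neg_pow, hk.neg_one_pow]; ring
    · rw [hk.neg_pow, hk.neg_one_pow]; ring
  rw [heq] at hcomp
  refine hcomp.trans (isBigO_of_le _ fun x => ?_)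
  simp only [Function.comp_apply, Real.norm_eq_abs, abs_pow]
  rw [show 2 * z - x - z = -(x - z) by ring, abs_neg]

/-- The coefficients of the rescaled interpolation polynomial
`P_h(w) = p_h(z + w h) = ∑_j L_j(h) w^j` satisfy `L_j(h) = h^j f^{(j)}(z)/j! + O(h^{n+1})`. -/
theorem rescaled_interpolation_coeffs
    (n : ℕ) (z : ℝ) (a : Fin (n + 1) → ℝ) (ha : StrictMono a)
    (f : ℝ → ℝ) (δ : ℝ) (hδ : 0 < δ) (hf : ContDiffOn ℝ (n + 1) f (Metric.ball z δ))
    (p : ℝ → Polynomial ℝ)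
    (hdeg : ∀ h : ℝ, 0 < h → (p h).natDegree ≤ n)
    (hinterp : ∀ h : ℝ, 0 < h → ∀ i : Fin (n + 1),
      (p h).eval (z + a i * h) = f (z + a i * h)) :
    ∀ j : ℕ, j ≤ n →
      (fun h : ℝ => ((p h).comp (Polynomial.C z + Polynomial.C h * Polynomial.X)).coeff j -
          h ^ j / (Nat.factorial j : ℝ) * iteratedDeriv j f z)
        =O[𝓝[>] (0 : ℝ)] fun h => h ^ (n + 1) := by 
  intro j hj
  classical
  have hinj : Set.InjOn a (Finset.univ : Finset (Fin (n + 1))) := ha.injective.injOn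
  have hcard : ((Finset.univ : Finset (Fin (n + 1))).card : WithBot ℕ) = ((n + 1 : ℕ) : WithBot ℕ) := by
    simp
  -- Step A : the rescaled polynomial is the Lagrange interpolation at the fixed nodes `a`
  have hQ : ∀ h : ℝ, 0 < h →
      (p h).comp (C z + C h * X) =
        Lagrange.interpolate Finset.univ a (fun i => f (z + a i * h)) := by
    intro h hh
    refine Lagrange.eq_interpolate_of_eval_eq _ hinj ?_ ?_
    · rw [hcard]
      refine lt_of_le_of_lt (Polynomial.degree_le_natDegree) ?_
      rw [Polynomial.natDegree_comp]
      have h1 : (C z + C h * X).natDegree = 1 := by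
        rw [add_comm]; exact Polynomial.natDegree_linear (ne_of_gt hh)
      rw [h1, mul_one]
      exact_mod_cast Nat.lt_succ_of_le (hdeg h hh)
    · intro i _
      rw [Polynomial.eval_comp]
      simp only [eval_add, eval_C, eval_mul, eval_X]
      rw [mul_comm h (a i)]
      exact hinterp h hh i
  -- Step B : interpolation reproduces monomials of degree ≤ n
  have hXk : ∀ k : ℕ, k ≤ n →
      (X ^ k : ℝ[X]) = Lagrange.interpolate Finset.univ a (fun i => a i ^ k) := by
    intro k hk
    refine Lagrange.eq_interpolate_of_eval_eq _ hinj ?_ ?_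
    · rw [hcard, Polynomial.degree_X_pow]
      exact_mod_cast Nat.lt_succ_of_le hk
    · intro i _; simp
  -- coefficient of an interpolation polynomial
  have hco : ∀ r : Fin (n + 1) → ℝ,
      (Lagrange.interpolate Finset.univ a r).coeff j
        = ∑ i : Fin (n + 1), r i * (Lagrange.basis Finset.univ a i).coeff j := by
    intro r
    rw [Lagrange.interpolate_apply, Polynomial.finset_sum_coeff]
    exact Finset.sum_congr rfl fun i _ => by rw [Polynomial.coeff_C_mul]
  -- Taylor error at each node
  set E : Fin (n + 1) → ℝ → ℝ := fun i h =>
    f (z + a i * h) - ∑ k ∈ Finset.range (n + 1),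
      (k.factorial : ℝ)⁻¹ * (a i * h) ^ k * iteratedDeriv k f z with hEdef
  have hE : ∀ i : Fin (n + 1), (fun h => E i h) =O[𝓝[>] (0 : ℝ)] fun h => h ^ (n + 1) := by
    intro i
    have hφ : Tendsto (fun h : ℝ => z + a i * h) (𝓝[>] (0 : ℝ)) (𝓝 z) := by
      have hc : Continuous fun h : ℝ => z + a i * h := by continuity
      exact (hc.tendsto' 0 z (by simp)).mono_left nhdsWithin_le_nhds
    have h1 := (taylor_isBigO hδ hf).comp_tendsto hφ
    simp only [Function.comp_def, add_sub_cancel_left] at h1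
    refine (h1.trans ?_)
    refine IsBigO.of_bound (|a i| ^ (n + 1)) ?_
    filter_upwards with h
    simp [abs_mul, mul_pow, Real.norm_eq_abs, abs_pow]
  -- the key identity for h > 0
  have key : ∀ h : ℝ, 0 < h →
      ((p h).comp (C z + C h * X)).coeff j - h ^ j / (Nat.factorial j : ℝ) * iteratedDeriv j f z
        = ∑ i : Fin (n + 1), (Lagrange.basis Finset.univ a i).coeff j * E i h := by
    intro h hh
    rw [hQ h hh, hco]
    have e1 : ∑ i : Fin (n + 1), f (z + a i * h) * (Lagrange.basis Finset.univ a i).coeff j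
        = (∑ i : Fin (n + 1), (∑ k ∈ Finset.range (n + 1),
              (k.factorial : ℝ)⁻¹ * (a i * h) ^ k * iteratedDeriv k f z)
                * (Lagrange.basis Finset.univ a i).coeff j)
          + ∑ i : Fin (n + 1), (Lagrange.basis Finset.univ a i).coeff j * E i h := by
      rw [← Finset.sum_add_distrib]
      refine Finset.sum_congr rfl fun i _ => ?_
      simp only [hEdef]
      ring
    have e2 : ∑ i : Fin (n + 1), (∑ k ∈ Finset.range (n + 1),
          (k.factorial : ℝ)⁻¹ * (a i * h) ^ k * iteratedDeriv k f z)
            * (Lagrange.basis Finset.univ a i).coeff j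
        = h ^ j / (Nat.factorial j : ℝ) * iteratedDeriv j f z := by
      simp only [Finset.sum_mul]
      rw [Finset.sum_comm]
      have e3 : ∀ k ∈ Finset.range (n + 1),
          ∑ i : Fin (n + 1), ((k.factorial : ℝ)⁻¹ * (a i * h) ^ k * iteratedDeriv k f z)
              * (Lagrange.basis Finset.univ a i).coeff j
          = ((k.factorial : ℝ)⁻¹ * h ^ k * iteratedDeriv k f z) * ((X : ℝ[X]) ^ k).coeff j := by
        intro k hk
        rw [hXk k (Nat.lt_succ_iff.mp (Finset.mem_range.mp hk)), hco, Finset.mul_sum]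
        refine Finset.sum_congr rfl fun i _ => ?_
        ring
      rw [Finset.sum_congr rfl e3]
      have e4 : ∀ k ∈ Finset.range (n + 1),
          ((k.factorial : ℝ)⁻¹ * h ^ k * iteratedDeriv k f z) * ((X : ℝ[X]) ^ k).coeff j
          = if j = k then (k.factorial : ℝ)⁻¹ * h ^ k * iteratedDeriv k f z else 0 := by
        intro k _
        rw [Polynomial.coeff_X_pow]
        split <;> simp
      rw [Finset.sum_congr rfl e4, Finset.sum_ite_eq, if_pos (Finset.mem_range.mpr (Nat.lt_succ_of_le hj))]
      rw [div_eq_inv_mul]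
    rw [e1, e2]
    ring
  have hsum : (fun h : ℝ => ∑ i : Fin (n + 1),
      (Lagrange.basis Finset.univ a i).coeff j * E i h) =O[𝓝[>] (0 : ℝ)] fun h => h ^ (n + 1) :=
    IsBigO.fun_sum fun i _ => (hE i).const_mul_left _
  refine hsum.congr' ?_ EventuallyEq.rfl
  filter_upwards [self_mem_nhdsWithin] with h (hh : h ∈ Set.Ioi 0)
  exact (key h hh).symm
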